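/- Cyclicity of the trace form induced by a representation (affine, degree-zero version of Lemma 2.6 of the paper): let (A, ρ) be affine Lie algebroid data over R, E a finite free R-module, and θ : A → End_K(E) a K-linear morphism of Lie algebras (End_K(E) with the commutator bracket) such that, for every a ∈ A, θ(a) is a derivation pair over ρ(a). Then for every x ∈ ker ρ the endomorphism θ(x) is R-linear, and for all a ∈ A and x, y ∈ ker ρ, denoting by X, Y, Xₐ, Yₐ the R-linear endomorphisms of E underlying θ(x), θ(y), θ(⁅a,x⁆), θ(⁅a,y⁆), one has Tr(Xₐ∘Y) + Tr(X∘Yₐ) = ρ(a)(Tr(X∘Y)), where Tr denotes the trace of R-linear endomorphisms of E. -/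

import Mathlib

/-- Cyclicity of the trace form induced by a representation: let `(A, ρ)`
be affine Lie algebroid data over `R`, `E` a finite free `R`-module, and
`θ : A → End_K(E)` a `K`-linear morphism of Lie algebras (`End_K(E)` with the
commutator bracket) such that, for every `a ∈ A`, `θ a` is a derivation pair over
`ρ a`. Then for every `x ∈ ker ρ` the endomorphism `θ x` is `R`-linear, and for all
`a ∈ A`, `x, y ∈ ker ρ`, denoting by `X, Y, Xₐ, Yₐ` the `R`-linear endomorphisms of `E`
underlying `θ x`, `θ y`, `θ ⁅a,x⁆`, `θ ⁅a,y⁆`, one has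
`Tr(Xₐ∘Y) + Tr(X∘Yₐ) = ρ a (Tr(X∘Y))`. -/
theorem trace_form_of_representation_cyclic
    {K R A E : Type*} [Field K] [CharZero K] [CommRing R] [Algebra K R]
    [LieRing A] [LieAlgebra K A] [Module R A] [IsScalarTower K R A]
    [AddCommGroup E] [Module R E] [Module K E] [IsScalarTower K R E]
    [Module.Free R E] [Module.Finite R E]
    (ρ : A →ₗ[R] Derivation K R R)
    (hmor : ∀ a b : A, ρ ⁅a, b⁆ = ⁅ρ a, ρ b⁆)
    (hleib : ∀ (a b : A) (f : R), ⁅a, f • b⁆ = f • ⁅a, b⁆ + (ρ a f) • b)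
    (θ : A →ₗ[K] (E →ₗ[K] E))
    (hθmor : ∀ a b : A, θ ⁅a, b⁆ = θ a ∘ₗ θ b - θ b ∘ₗ θ a)
    (hθpair : ∀ (a : A) (f : R) (e : E), θ a (f • e) = f • θ a e + (ρ a f) • e)
    (a x y : A) (hx : ρ x = 0) (hy : ρ y = 0)
    (X Y Xa Ya : E →ₗ[R] E)
    (hX : ∀ e : E, X e = θ x e) (hY : ∀ e : E, Y e = θ y e)
    (hXa : ∀ e : E, Xa e = θ ⁅a, x⁆ e) (hYa : ∀ e : E, Ya e = θ ⁅a, y⁆ e) :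
    (∀ (f : R) (e : E), θ x (f • e) = f • θ x e) ∧
      LinearMap.trace R E (Xa ∘ₗ Y) + LinearMap.trace R E (X ∘ₗ Ya)
        = ρ a (LinearMap.trace R E (X ∘ₗ Y)) := by
  classical
  have hxR : ∀ (f : R) (e : E), θ x (f • e) = f • θ x e := by
    intro f e
    rw [hθpair, hx]
    simp
  refine ⟨hxR, ?_⟩
  set M : E →ₗ[R] E := X ∘ₗ Y with hM
  set S : E →ₗ[R] E := Xa ∘ₗ Y + X ∘ₗ Ya with hS
  have hsum : ∀ e : E, S e = θ a (M e) - M (θ a e) := by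
    intro e
    have h1 : (Xa ∘ₗ Y) e = θ a (θ x (θ y e)) - θ x (θ a (θ y e)) := by
      simp only [LinearMap.comp_apply]
      rw [hXa, hY, hθmor]
      simp [LinearMap.sub_apply, LinearMap.comp_apply]
    have h2 : (X ∘ₗ Ya) e = θ x (θ a (θ y e)) - θ x (θ y (θ a e)) := by
      simp only [LinearMap.comp_apply]
      rw [hX, hYa, hθmor]
      simp [LinearMap.sub_apply, LinearMap.comp_apply]
    have h3 : M e = θ x (θ y e) := by
      simp only [hM, LinearMap.comp_apply]; rw [hX, hY]
    have h4 : M (θ a e) = θ x (θ y (θ a e)) := by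
      simp only [hM, LinearMap.comp_apply]; rw [hX, hY]
    have : S e = (Xa ∘ₗ Y) e + (X ∘ₗ Ya) e := by simp [hS]
    rw [this, h1, h2, h3, h4]
    abel
  let b := Module.Free.chooseBasis R E
  have tr_eq : ∀ (N : E →ₗ[R] E),
      LinearMap.trace R E N = ∑ j, b.repr (N (b j)) j := by
    intro N
    rw [LinearMap.trace_eq_matrix_trace R b, Matrix.trace]
    simp [Matrix.diag, LinearMap.toMatrix_apply]
  have key : ∀ j, b.repr (S (b j)) j =
      (∑ i, (b.repr (M (b j)) i * b.repr (θ a (b i)) j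
        + ρ a (b.repr (M (b j)) i) * (if i = j then (1:R) else 0)))
      - ∑ i, b.repr (θ a (b j)) i * b.repr (M (b i)) j := by
    intro j
    have e1 : θ a (M (b j)) = ∑ i, (b.repr (M (b j)) i • θ a (b i)
        + (ρ a (b.repr (M (b j)) i)) • b i) := by
      conv_lhs => rw [← b.linearCombination_repr (x := M (b j))]
      rw [Finsupp.linearCombination_apply, Finsupp.sum_fintype]
      · rw [map_sum]
        exact Finset.sum_congr rfl fun i _ => hθpair a _ _
      · intro i; simp
    have e2 : M (θ a (b j)) = ∑ i, b.repr (θ a (b j)) i • M (b i) := by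
      conv_lhs => rw [← b.linearCombination_repr (x := θ a (b j))]
      rw [Finsupp.linearCombination_apply, Finsupp.sum_fintype]
      · rw [map_sum]; simp
      · intro i; simp
    rw [hsum (b j), e1, e2]
    simp [map_sub, map_sum, map_add, Finsupp.smul_apply, smul_eq_mul,
      b.repr_self, Finsupp.single_apply, mul_comm]
  have cancel : ∑ j, ∑ i, b.repr (M (b j)) i * b.repr (θ a (b i)) j
      = ∑ j, ∑ i, b.repr (θ a (b j)) i * b.repr (M (b i)) j := by
    rw [Finset.sum_comm]
    exact Finset.sum_congr rfl fun j _ => Finset.sum_congr rfl fun i _ => mul_comm _ _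
  calc LinearMap.trace R E (Xa ∘ₗ Y) + LinearMap.trace R E (X ∘ₗ Ya)
      = LinearMap.trace R E S := by rw [hS, map_add]
    _ = ∑ j, b.repr (S (b j)) j := tr_eq S
    _ = ∑ j, ρ a (b.repr (M (b j)) j) := by
        rw [Finset.sum_congr rfl fun j _ => key j]
        simp only [Finset.sum_add_distrib, Finset.sum_sub_distrib]
        rw [cancel]
        simp [mul_ite, Finset.sum_ite_eq, Finset.sum_ite_eq']
    _ = ρ a (∑ j, b.repr (M (b j)) j) := (map_sum (ρ a).toLinearMap _ _).symm
    _ = ρ a (LinearMap.trace R E M) := by rw [← tr_eq M]
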